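/- Let (α, v) be a cocycle crossed action of a group G on a group U, H ⊴ G normal with α_n inner for each n ∈ H, and H̄ = { (u⁻¹,n) : n ∈ H, Ad(u) = α_n } ⊆ U ⋊_v G. For g ∈ G define Φ_g : H̄ → H̄ by Φ_g(x) = (1,g) x (1,g)⁻¹. Then each Φ_g is a well-defined automorphism of H̄ and Φ_g ∘ Φ_h = Φ_{gh} for all g, h ∈ G; i.e. Φ defines an action of G on H̄, even though g ↦ (1,g) is in general not a group homomorphism into U ⋊_v G. -/
import Mathlib


/-- Conjugation by `(1,g)` defines an action `Φ` of `G` on `H̄`: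
each `Φ_g` maps `H̄` to `H̄`, is multiplicative on `H̄`, `Φ_e = id`, and
`Φ_g ∘ Φ_h = Φ_{gh}` on `H̄`. -/
theorem stmt10 {G U : Type*} [Group G] [Group U]
    (α : G → MulAut U) (v : G → G → U)
    (hα1 : α 1 = 1)
    (hv1 : ∀ h : G, v 1 h = 1) (hv2 : ∀ g : G, v g 1 = 1)
    (hAd : ∀ g h : G, ∀ x : U, α g (α h x) = v g h * α (g * h) x * (v g h)⁻¹)
    (hcoc : ∀ g h k : G, v g h * v (g * h) k = α g (v h k) * v g (h * k))
    (mul' : U × G → U × G → U × G)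
    (hmul : ∀ a b : U × G, mul' a b = (a.1 * α a.2 b.1 * v a.2 b.2, a.2 * b.2))
    (H : Subgroup G) [H.Normal]
    (hinner : ∀ n ∈ H, ∃ u : U, ∀ y : U, α n y = u * y * u⁻¹)
    (Hbar : Set (U × G))
    (hHbar : ∀ x : U × G, x ∈ Hbar ↔ x.2 ∈ H ∧ ∀ y : U, α x.2 y = x.1⁻¹ * y * x.1) :
    -- Φ_g is well defined: (1,g)·x·(1,g)⁻¹ ∈ H̄ for x ∈ H̄
    (∀ g : G, ∀ b : U × G,
      mul' ((1 : U), g) b = ((1 : U), (1 : G)) →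
      mul' b ((1 : U), g) = ((1 : U), (1 : G)) →
      ∀ x ∈ Hbar, mul' (mul' ((1 : U), g) x) b ∈ Hbar) ∧
    -- Φ_g is multiplicative on H̄
    (∀ g : G, ∀ b : U × G,
      mul' ((1 : U), g) b = ((1 : U), (1 : G)) →
      mul' b ((1 : U), g) = ((1 : U), (1 : G)) →
      ∀ x ∈ Hbar, ∀ y ∈ Hbar,
        mul' (mul' ((1 : U), g) (mul' x y)) b =
          mul' (mul' (mul' ((1 : U), g) x) b) (mul' (mul' ((1 : U), g) y) b)) ∧
    -- Φ_e = id on H̄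
    (∀ x ∈ Hbar,
      mul' (mul' ((1 : U), (1 : G)) x) ((1 : U), (1 : G)) = x) ∧
    -- Φ_g ∘ Φ_h = Φ_{gh} on H̄
    (∀ g h : G, ∀ bg bh bgh : U × G,
      mul' ((1 : U), g) bg = ((1 : U), (1 : G)) →
      mul' bg ((1 : U), g) = ((1 : U), (1 : G)) →
      mul' ((1 : U), h) bh = ((1 : U), (1 : G)) →
      mul' bh ((1 : U), h) = ((1 : U), (1 : G)) →
      mul' ((1 : U), g * h) bgh = ((1 : U), (1 : G)) →
      mul' bgh ((1 : U), g * h) = ((1 : U), (1 : G)) →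
      ∀ x ∈ Hbar,
        mul' (mul' ((1 : U), g) (mul' (mul' ((1 : U), h) x) bh)) bg =
          mul' (mul' ((1 : U), g * h) x) bgh) := by

  have hone : ∀ a : U × G, mul' ((1 : U), (1 : G)) a = a := by
    intro a
    rw [hmul]
    simp [hα1, hv1]
  have hone' : ∀ a : U × G, mul' a ((1 : U), (1 : G)) = a := by
    intro a
    rw [hmul]
    simp [hv2]
  have hassoc : ∀ a b c : U × G, mul' (mul' a b) c = mul' a (mul' b c) := by
    intro a b c
    rw [hmul, hmul, hmul, hmul]
    simp only [Prod.mk.injEq]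
    refine ⟨?_, mul_assoc _ _ _⟩
    rw [map_mul, map_mul, hAd a.2 b.2 c.1]
    have hY : α a.2 (v b.2 c.2)
        = v a.2 b.2 * v (a.2 * b.2) c.2 * (v a.2 (b.2 * c.2))⁻¹ := by
      rw [hcoc a.2 b.2 c.2, mul_inv_cancel_right]
    rw [hY]
    group
  have hmul2 : ∀ a b : U × G, (mul' a b).2 = a.2 * b.2 := by
    intro a b; rw [hmul]
  have hUcomm : ∀ z ∈ Hbar, ∀ w : U, mul' (w, (1:G)) z = mul' z (w, (1:G)) := by
    intro z hz w
    obtain ⟨_, h1⟩ := (hHbar z).mp hz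
    rw [hmul, hmul]
    simp only [hα1, MulAut.one_apply, hv1, hv2, mul_one, one_mul, Prod.mk.injEq, and_true]
    rw [h1 w]
    group
  have hswap : ∀ (g : G) (w : U),
      mul' (w, (1:G)) ((1:U), g) = mul' ((1:U), g) ((α g)⁻¹ w, (1:G)) := by
    intro g w
    rw [hmul, hmul]
    simp [hα1, hv1, hv2]
  have key1 : ∀ g : G, ∀ b : U × G,
      mul' ((1 : U), g) b = ((1 : U), (1 : G)) →
      mul' b ((1 : U), g) = ((1 : U), (1 : G)) →
      ∀ x ∈ Hbar, mul' (mul' ((1 : U), g) x) b ∈ Hbar := by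
    intro g b hgb hbg x hx
    obtain ⟨hx2, _⟩ := (hHbar x).mp hx
    have hb2 : b.2 = g⁻¹ := by
      have h := congrArg Prod.snd hgb
      rw [hmul2] at h
      exact eq_inv_of_mul_eq_one_right h
    set Z : U × G := mul' (mul' ((1:U), g) x) b with hZ
    rw [hHbar]
    constructor
    · rw [hZ, hmul2, hmul2, hb2]
      show g * x.2 * g⁻¹ ∈ H
      exact Subgroup.Normal.conj_mem ‹H.Normal› x.2 hx2 g
    · intro y
      have hw' : mul' ((α g)⁻¹ y, (1:G)) b = mul' b (y, (1:G)) := by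
        calc mul' ((α g)⁻¹ y, (1:G)) b
            = mul' ((1:U),(1:G)) (mul' ((α g)⁻¹ y, (1:G)) b) := (hone _).symm
          _ = mul' (mul' b ((1:U), g)) (mul' ((α g)⁻¹ y, (1:G)) b) := by rw [hbg]
          _ = mul' b (mul' ((1:U), g) (mul' ((α g)⁻¹ y, (1:G)) b)) :=
              hassoc b ((1:U), g) (mul' ((α g)⁻¹ y, (1:G)) b)
          _ = mul' b (mul' (mul' ((1:U), g) ((α g)⁻¹ y, (1:G))) b) := by
              rw [hassoc ((1:U), g) ((α g)⁻¹ y, (1:G)) b]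
          _ = mul' b (mul' (mul' (y, (1:G)) ((1:U), g)) b) := by rw [hswap g y]
          _ = mul' b (mul' (y, (1:G)) (mul' ((1:U), g) b)) := by
              rw [hassoc (y, (1:G)) ((1:U), g) b]
          _ = mul' b (y, (1:G)) := by rw [hgb, hone']
      have hcommZ : mul' (y, (1:G)) Z = mul' Z (y, (1:G)) := by
        rw [hZ]
        calc mul' (y,(1:G)) (mul' (mul' ((1:U),g) x) b)
            = mul' (y,(1:G)) (mul' ((1:U),g) (mul' x b)) := by rw [hassoc ((1:U),g) x b]
          _ = mul' (mul' (y,(1:G)) ((1:U),g)) (mul' x b) :=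
              (hassoc (y,(1:G)) ((1:U),g) (mul' x b)).symm
          _ = mul' (mul' ((1:U),g) ((α g)⁻¹ y,(1:G))) (mul' x b) := by rw [hswap g y]
          _ = mul' ((1:U),g) (mul' ((α g)⁻¹ y,(1:G)) (mul' x b)) :=
              hassoc ((1:U),g) ((α g)⁻¹ y,(1:G)) (mul' x b)
          _ = mul' ((1:U),g) (mul' (mul' ((α g)⁻¹ y,(1:G)) x) b) := by
              rw [hassoc ((α g)⁻¹ y,(1:G)) x b]
          _ = mul' ((1:U),g) (mul' (mul' x ((α g)⁻¹ y,(1:G))) b) := by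
              rw [hUcomm x hx ((α g)⁻¹ y)]
          _ = mul' ((1:U),g) (mul' x (mul' ((α g)⁻¹ y,(1:G)) b)) := by
              rw [hassoc x ((α g)⁻¹ y,(1:G)) b]
          _ = mul' ((1:U),g) (mul' x (mul' b (y,(1:G)))) := by rw [hw']
          _ = mul' (mul' (mul' ((1:U),g) x) b) (y,(1:G)) := by
              rw [hassoc (mul' ((1:U),g) x) b (y,(1:G)), hassoc ((1:U),g) x (mul' b (y,(1:G)))]
      rw [hmul (y,(1:G)) Z, hmul Z (y,(1:G))] at hcommZ
      simp only [hα1, MulAut.one_apply, hv1, hv2, mul_one, one_mul, Prod.mk.injEq,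
        and_true] at hcommZ
      rw [mul_assoc, hcommZ, inv_mul_cancel_left]
  refine ⟨key1, ?_, ?_, ?_⟩
  · -- multiplicativity
    intro g b hgb hbg x _hx y _hy
    have h1 : mul' b (mul' (mul' ((1:U),g) y) b) = mul' y b := by
      rw [hassoc ((1:U),g) y b, ← hassoc b ((1:U),g) (mul' y b), hbg, hone]
    calc mul' (mul' ((1:U),g) (mul' x y)) b
        = mul' (mul' ((1:U),g) x) (mul' y b) := by
          rw [hassoc ((1:U),g) (mul' x y) b, hassoc x y b, ← hassoc ((1:U),g) x (mul' y b)]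
      _ = mul' (mul' ((1:U),g) x) (mul' b (mul' (mul' ((1:U),g) y) b)) := by rw [h1]
      _ = mul' (mul' (mul' ((1:U),g) x) b) (mul' (mul' ((1:U),g) y) b) :=
          (hassoc (mul' ((1:U),g) x) b (mul' (mul' ((1:U),g) y) b)).symm
  · -- identity
    intro x _hx
    rw [hone x, hone' x]
  · -- composition
    intro g h bg bh bgh hg1 hg2 hh1 hh2 hgh1 hgh2 x hx
    have hGH : mul' ((1:U),g) ((1:U),h) = mul' (v g h, (1:G)) ((1:U), g*h) := by
      rw [hmul, hmul]
      simp [hα1, hv1, hv2]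
    have hcc' : mul' (v g h,(1:G)) ((v g h)⁻¹,(1:G)) = ((1:U),(1:G)) := by
      rw [hmul]
      simp [hα1, hv1]
    have hc'c : mul' ((v g h)⁻¹,(1:G)) (v g h,(1:G)) = ((1:U),(1:G)) := by
      rw [hmul]
      simp [hα1, hv1]
    have hA : mul' (mul' bgh ((v g h)⁻¹,(1:G))) (mul' (v g h,(1:G)) ((1:U),g*h))
        = ((1:U),(1:G)) := by
      rw [hassoc bgh ((v g h)⁻¹,(1:G)) (mul' (v g h,(1:G)) ((1:U),g*h)),
        ← hassoc ((v g h)⁻¹,(1:G)) (v g h,(1:G)) ((1:U),g*h), hc'c, hone, hgh2]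
    have hB : mul' (mul' (v g h,(1:G)) ((1:U),g*h)) (mul' bh bg) = ((1:U),(1:G)) := by
      rw [← hGH, hassoc ((1:U),g) ((1:U),h) (mul' bh bg), ← hassoc ((1:U),h) bh bg,
        hh1, hone, hg1]
    have hbhbg : mul' bh bg = mul' bgh ((v g h)⁻¹,(1:G)) := by
      calc mul' bh bg = mul' ((1:U),(1:G)) (mul' bh bg) := (hone _).symm
        _ = mul' (mul' (mul' bgh ((v g h)⁻¹,(1:G))) (mul' (v g h,(1:G)) ((1:U),g*h)))
              (mul' bh bg) := by rw [hA]
        _ = mul' (mul' bgh ((v g h)⁻¹,(1:G)))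
              (mul' (mul' (v g h,(1:G)) ((1:U),g*h)) (mul' bh bg)) :=
            hassoc _ _ _
        _ = mul' bgh ((v g h)⁻¹,(1:G)) := by rw [hB, hone']
    have hZmem : mul' (mul' ((1:U), g*h) x) bgh ∈ Hbar := key1 (g*h) bgh hgh1 hgh2 x hx
    calc mul' (mul' ((1:U),g) (mul' (mul' ((1:U),h) x) bh)) bg
        = mul' (mul' ((1:U),g) ((1:U),h)) (mul' x (mul' bh bg)) := by
          rw [hassoc ((1:U),g) (mul' (mul' ((1:U),h) x) bh) bg,
            hassoc (mul' ((1:U),h) x) bh bg, hassoc ((1:U),h) x (mul' bh bg),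
            hassoc ((1:U),g) ((1:U),h) (mul' x (mul' bh bg))]
      _ = mul' (mul' (v g h,(1:G)) ((1:U),g*h)) (mul' x (mul' bgh ((v g h)⁻¹,(1:G)))) := by
          rw [hGH, hbhbg]
      _ = mul' (v g h,(1:G)) (mul' (mul' (mul' ((1:U),g*h) x) bgh) ((v g h)⁻¹,(1:G))) := by
          rw [hassoc (v g h,(1:G)) ((1:U),g*h) (mul' x (mul' bgh ((v g h)⁻¹,(1:G)))),
            hassoc (mul' ((1:U),g*h) x) bgh ((v g h)⁻¹,(1:G)),
            hassoc ((1:U),g*h) x (mul' bgh ((v g h)⁻¹,(1:G)))]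
      _ = mul' (mul' (v g h,(1:G)) (mul' (mul' ((1:U),g*h) x) bgh)) ((v g h)⁻¹,(1:G)) :=
          (hassoc _ _ _).symm
      _ = mul' (mul' (mul' (mul' ((1:U),g*h) x) bgh) (v g h,(1:G))) ((v g h)⁻¹,(1:G)) := by
          rw [hUcomm _ hZmem (v g h)]
      _ = mul' (mul' (mul' ((1:U),g*h) x) bgh) (mul' (v g h,(1:G)) ((v g h)⁻¹,(1:G))) :=
          hassoc _ _ _
      _ = mul' (mul' ((1:U),g*h) x) bgh := by rw [hcc', hone']
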